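/- Let F be a finite field with q elements and K/F an extension of degree n. If χ is a multiplicative character of K* that is nontrivial on F*, then the Eisenstein sum E(χ) = Σ_{Tr(s)=1} χ(s) has absolute value q^{(n-1)/2}. -/

import Mathlib

open Finset

lemma my_gaussSum_inv_inv_eq_conj {R : Type*} [Field R] [Fintype R]
    (χ : MulChar R ℂ) (ψ : AddChar R ℂ) :
    gaussSum χ⁻¹ ψ⁻¹ = (starRingEnd ℂ) (gaussSum χ ψ) := by
  have hR : 0 < ringChar R := (CharP.char_is_prime R (ringChar R)).pos
  rw [gaussSum, gaussSum, map_sum]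
  refine Finset.sum_congr rfl fun a _ => ?_
  rw [map_mul, ← MulChar.star_apply' , ← AddChar.starComp_apply hR]
  rfl

lemma my_abs_gaussSum {R : Type*} [Field R] [Fintype R] {χ : MulChar R ℂ} {ψ : AddChar R ℂ}
    (hχ : χ ≠ 1) (hψ : ψ.IsPrimitive) :
    ‖gaussSum χ ψ‖ = Real.sqrt (Fintype.card R) := by
  have h := gaussSum_mul_gaussSum_eq_card hχ hψ
  rw [my_gaussSum_inv_inv_eq_conj, Complex.mul_conj] at h
  have h2 : Complex.normSq (gaussSum χ ψ) = (Fintype.card R : ℝ) := by exact_mod_cast h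
  rw [← Complex.sq_norm] at h2
  rw [← h2, Real.sqrt_sq (norm_nonneg _)]

theorem abs_eisenstein_of_nontrivial_on_base
    (F K : Type*) [Field F] [Field K] [Fintype F] [Fintype K] [DecidableEq F] [DecidableEq K]
    [Algebra F K] (q n : ℕ) (hq : Fintype.card F = q) (hn : Module.finrank F K = n)
    (χ : Kˣ →* ℂ)
    (hχ : ∃ u : Fˣ, χ (Units.map (algebraMap F K : F →+* K).toMonoidHom u) ≠ 1) :
    ‖(∑ s ∈ Finset.univ.filter (fun s : Kˣ => Algebra.trace F K (s : K) = 1), χ s)‖ =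
      (q : ℝ) ^ (((n : ℝ) - 1) / 2) := by
  classical
  obtain ⟨u, hu⟩ := hχ
  set ι : Fˣ →* Kˣ := Units.map (algebraMap F K : F →+* K).toMonoidHom with hι
  haveI : Module.Finite F K := Module.Finite.of_finite
  set T : K →ₗ[F] F := Algebra.trace F K with hTdef
  -- multiplicative characters
  set χ' : MulChar K ℂ := MulChar.ofUnitHom χ.toHomUnits with hχ'def
  have hχ'coe : ∀ v : Kˣ, χ' (v : K) = χ v := fun v => by
    rw [hχ'def, MulChar.ofUnitHom_coe]; rfl
  set χF : MulChar F ℂ := MulChar.ofUnitHom (χ.toHomUnits.comp ι) with hχFdef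
  have hχFcoe : ∀ t : Fˣ, χF (t : F) = χ (ι t) := fun t => by
    rw [hχFdef, MulChar.ofUnitHom_coe]; rfl
  have hχF1 : χF ≠ 1 := by
    intro h
    apply hu
    rw [← hχFcoe u, h, MulChar.one_apply_coe]
  have hχ'1 : χ' ≠ 1 := by
    intro h
    apply hu
    rw [← hχ'coe (ι u), h, MulChar.one_apply_coe]
  -- χF agrees with χ' through the algebra map
  have halg : ∀ t : F, χF t = χ' (algebraMap F K t) := by
    intro t
    rcases eq_or_ne t 0 with rfl | ht
    · rw [(algebraMap F K).map_zero, MulChar.map_zero, MulChar.map_zero]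
    · have h1 := hχFcoe (Units.mk0 t ht)
      rw [Units.val_mk0] at h1
      rw [h1, ← hχ'coe (ι (Units.mk0 t ht))]
      congr 1
  -- additive characters
  set ψ : AddChar F ℂ := AddChar.FiniteField.primitiveChar_to_Complex F with hψdef
  have hψprim : ψ.IsPrimitive := AddChar.FiniteField.primitiveChar_to_Complex_isPrimitive F
  have hψ1 : ψ ≠ 1 := by
    intro h
    exact hψprim (one_ne_zero) (by rw [AddChar.mulShift_one, h])
  set ψK : AddChar K ℂ := ψ.compAddMonoidHom T.toAddMonoidHom with hψKdef
  have hψKapp : ∀ x : K, ψK x = ψ (T x) := fun x => rfl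
  have hTsurj : Function.Surjective T := Algebra.trace_surjective F K
  have hψK1 : ψK ≠ 1 := by
    obtain ⟨a, ha⟩ := AddChar.ne_one_iff.1 hψ1
    obtain ⟨x, hx⟩ := hTsurj a
    exact AddChar.ne_one_iff.2 ⟨x, by rw [hψKapp, hx]; exact ha⟩
  have hψKprim : ψK.IsPrimitive := AddChar.IsPrimitive.of_ne_one hψK1
  -- the Eisenstein sum over K
  set EK : ℂ := ∑ x ∈ Finset.univ.filter (fun x : K => T x = 1), χ' x with hEKdef
  -- it equals the sum in the statement
  have hE : EK = ∑ s ∈ Finset.univ.filter (fun s : Kˣ => Algebra.trace F K (s : K) = 1), χ s := by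
    rw [hEKdef]
    refine Finset.sum_bij' (fun (x : K) hx => Units.mk0 x ?_) (fun (s : Kˣ) _ => (s : K))
        ?_ ?_ ?_ ?_ ?_
    · intro h
      rw [Finset.mem_filter] at hx
      rw [h, map_zero] at hx
      exact one_ne_zero hx.2.symm
    · intro x hx
      rw [Finset.mem_filter] at hx ⊢
      exact ⟨Finset.mem_univ _, hx.2⟩
    · intro s hs
      rw [Finset.mem_filter] at hs ⊢
      exact ⟨Finset.mem_univ _, hs.2⟩
    · intro x hx; simp
    · intro s hs; simp
    · intro x hx
      rw [← hχ'coe (Units.mk0 x _), Units.val_mk0]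
  -- the fiber over 0 sums to 0
  have fiber0 : ∑ x ∈ Finset.univ.filter (fun x : K => T x = 0), χ' x = 0 := by
    set S := ∑ x ∈ Finset.univ.filter (fun x : K => T x = 0), χ' x with hSdef
    have key : χ (ι u) * S = S := by
      rw [hSdef, Finset.mul_sum]
      refine Finset.sum_nbij' (fun x => ((ι u : Kˣ) : K) * x)
        (fun x => (((ι u)⁻¹ : Kˣ) : K) * x) ?_ ?_ ?_ ?_ ?_
      · intro x hx
        rw [Finset.mem_filter] at hx ⊢
        refine ⟨Finset.mem_univ _, ?_⟩
        have h1 : ((ι u : Kˣ) : K) = algebraMap F K (u : F) := rfl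
        rw [h1, ← Algebra.smul_def, map_smul, hx.2, smul_zero]
      · intro x hx
        rw [Finset.mem_filter] at hx ⊢
        refine ⟨Finset.mem_univ _, ?_⟩
        have h1 : (((ι u)⁻¹ : Kˣ) : K) = algebraMap F K ((u⁻¹ : Fˣ) : F) := by
          simp [hι]
        rw [h1, ← Algebra.smul_def, map_smul, hx.2, smul_zero]
      · intro x hx
        rw [← mul_assoc, ← Units.val_mul, inv_mul_cancel, Units.val_one, one_mul]
      · intro x hx
        rw [← mul_assoc, ← Units.val_mul, mul_inv_cancel, Units.val_one, one_mul]
      · intro x hx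
        rw [map_mul, hχ'coe (ι u)]
    have h2 : (χ (ι u) - 1) * S = 0 := by
      rw [sub_mul, one_mul, key, sub_self]
    rcases mul_eq_zero.1 h2 with h3 | h3
    · exact (hu (sub_eq_zero.1 h3)).elim
    · exact h3
  -- every fiber sum is χF t * EK
  have fibert : ∀ t : F, ∑ x ∈ Finset.univ.filter (fun x : K => T x = t), χ' x = χF t * EK := by
    intro t
    rcases eq_or_ne t 0 with rfl | ht
    · rw [fiber0, MulChar.map_zero, zero_mul]
    · have halgt : algebraMap F K t ≠ 0 := by
        simpa using (algebraMap F K).injective.ne ht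
      rw [hEKdef, Finset.mul_sum]
      refine Finset.sum_nbij' (fun x => (algebraMap F K t)⁻¹ * x)
        (fun x => (algebraMap F K t) * x) ?_ ?_ ?_ ?_ ?_
      · intro x hx
        rw [Finset.mem_filter] at hx ⊢
        refine ⟨Finset.mem_univ _, ?_⟩
        have h1 : (algebraMap F K t)⁻¹ = algebraMap F K t⁻¹ := by
          rw [map_inv₀]
        rw [h1, ← Algebra.smul_def, map_smul, hx.2, smul_eq_mul, inv_mul_cancel₀ ht]
      · intro x hx
        rw [Finset.mem_filter] at hx ⊢
        refine ⟨Finset.mem_univ _, ?_⟩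
        rw [← Algebra.smul_def, map_smul, hx.2, smul_eq_mul, mul_one]
      · intro x hx
        rw [← mul_assoc, mul_inv_cancel₀ halgt, one_mul]
      · intro x hx
        rw [← mul_assoc, inv_mul_cancel₀ halgt, one_mul]
      · intro x hx
        rw [halg t, ← map_mul, ← mul_assoc, mul_inv_cancel₀ halgt, one_mul]
  -- the Gauss sum identity
  have key : gaussSum χ' ψK = gaussSum χF ψ * EK := by
    rw [gaussSum, ← Finset.sum_fiberwise Finset.univ (fun x : K => T x)
      (fun x => χ' x * ψK x)]
    have h1 : ∀ t : F, ∑ x ∈ Finset.univ.filter (fun x : K => T x = t), χ' x * ψK x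
        = χF t * ψ t * EK := by
      intro t
      have h2 : ∀ x ∈ Finset.univ.filter (fun x : K => T x = t), χ' x * ψK x = χ' x * ψ t := by
        intro x hx
        rw [Finset.mem_filter] at hx
        rw [hψKapp, hx.2]
      rw [Finset.sum_congr rfl h2, ← Finset.sum_mul, fibert t]
      ring
    rw [Finset.sum_congr rfl (fun t _ => h1 t), ← Finset.sum_mul, gaussSum]
  -- take absolute values
  have habsK : ‖gaussSum χ' ψK‖ = Real.sqrt (Fintype.card K) :=
    my_abs_gaussSum hχ'1 hψKprim
  have habsF : ‖gaussSum χF ψ‖ = Real.sqrt (Fintype.card F) :=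
    my_abs_gaussSum hχF1 hψprim
  have hq2 : 0 < q := hq ▸ Fintype.card_pos
  have hq0 : (0:ℝ) < (q:ℝ) := by exact_mod_cast hq2
  have hcardK : (Fintype.card K : ℝ) = (q:ℝ) ^ (n:ℕ) := by
    rw [Module.card_eq_pow_finrank (K := F) (V := K), hq, hn]
    push_cast
    ring
  have habsE : ‖EK‖ = Real.sqrt ((q:ℝ) ^ (n:ℕ)) / Real.sqrt (q:ℝ) := by
    have h3 : Real.sqrt (Fintype.card K) = Real.sqrt (Fintype.card F) * ‖EK‖ := by
      rw [← habsK, key, norm_mul, habsF]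
    rw [hq, hcardK] at h3
    have h4 : Real.sqrt (q:ℝ) ≠ 0 := by
      positivity
    field_simp at h3 ⊢
    linarith [h3]
  rw [← hE, habsE]
  rw [Real.sqrt_eq_rpow, Real.sqrt_eq_rpow, ← Real.rpow_natCast (q:ℝ) n,
    ← Real.rpow_mul hq0.le, ← Real.rpow_sub hq0]
  congr 1
  ring
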